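/- Let u₃, u₄ : [0,1] → ℝ be continuous with u₃ not causing degeneracy, and suppose z₃, z₄ : [0,1] → ℝ are twice (resp. three times) continuously differentiable with -z₃' + u₄' z₃ + u₃ z₄' = 0, -z₃ + z₄'' = 0, z₃(0) = 0, z₄(0) = z₄(1) = 0. Let φ₁, φ₂ be a fundamental system of solutions of the second-order ODE -y'' + u₄' y' + u₃ y = 0. If the 2×2 determinant det [[φ₁'(0), φ₂'(0)], [∫₀¹ φ₁ dξ, ∫₀¹ φ₂ dξ]] ≠ 0, then z₃ ≡ 0 and z₄ ≡ 0. -/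

import Mathlib

open Set intervalIntegral

lemma derivEqOn {f g : ℝ → ℝ} (hf : ContDiff ℝ 1 f) (hg : ContDiff ℝ 1 g)
    (h : Set.EqOn f g (Icc 0 1)) : Set.EqOn (deriv f) (deriv g) (Icc 0 1) := by
  have h1 : Set.EqOn (deriv f) (deriv g) (Ioo 0 1) := fun x hx => by
    have : f =ᶠ[nhds x] g := Filter.eventuallyEq_of_mem (isOpen_Ioo.mem_nhds hx)
      (fun y hy => h (Ioo_subset_Icc_self hy))
    exact this.deriv_eq
  have h2 := h1.closure (hf.continuous_deriv le_rfl) (hg.continuous_deriv le_rfl)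
  rwa [closure_Ioo (by norm_num : (0:ℝ) ≠ 1)] at h2

/-- Lemma 3.2 / Lemma `lemma1`: if `z₃, z₄` solve the homogeneous
kernel system with homogeneous boundary values and the fundamental-solution
determinant is nonzero, then `z₃ ≡ 0` and `z₄ ≡ 0` on `[0,1]`. -/
theorem stmt_3 (u₃ u₄ z₃ z₄ φ₁ φ₂ : ℝ → ℝ)
    (hu₃ : Continuous u₃) (hu₄ : ContDiff ℝ 1 u₄)
    (hz₃ : ContDiff ℝ 2 z₃) (hz₄ : ContDiff ℝ 3 z₄)
    (heq1 : ∀ x ∈ Icc (0:ℝ) 1,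
      -deriv z₃ x + deriv u₄ x * z₃ x + u₃ x * deriv z₄ x = 0)
    (heq2 : ∀ x ∈ Icc (0:ℝ) 1, -z₃ x + deriv (deriv z₄) x = 0)
    (hbc₃ : z₃ 0 = 0) (hbc₄0 : z₄ 0 = 0) (hbc₄1 : z₄ 1 = 0)
    (hφ₁ : ContDiff ℝ 2 φ₁) (hφ₂ : ContDiff ℝ 2 φ₂)
    (hφ₁sol : ∀ x ∈ Icc (0:ℝ) 1,
      -deriv (deriv φ₁) x + deriv u₄ x * deriv φ₁ x + u₃ x * φ₁ x = 0)
    (hφ₂sol : ∀ x ∈ Icc (0:ℝ) 1,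
      -deriv (deriv φ₂) x + deriv u₄ x * deriv φ₂ x + u₃ x * φ₂ x = 0)
    (hfund : ∀ y : ℝ → ℝ, ContDiff ℝ 2 y →
      (∀ x ∈ Icc (0:ℝ) 1,
        -deriv (deriv y) x + deriv u₄ x * deriv y x + u₃ x * y x = 0) →
      ∃ K₁ K₂ : ℝ, ∀ x ∈ Icc (0:ℝ) 1, y x = K₁ * φ₁ x + K₂ * φ₂ x)
    (hdet : deriv φ₁ 0 * (∫ ξ in (0:ℝ)..1, φ₂ ξ)
        - deriv φ₂ 0 * (∫ ξ in (0:ℝ)..1, φ₁ ξ) ≠ 0) :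
    ∀ x ∈ Icc (0:ℝ) 1, z₃ x = 0 ∧ z₄ x = 0 := by
  -- smoothness of derivatives of z₄
  have hz₄' : ContDiff ℝ (2+1:ℕ) z₄ := by exact_mod_cast hz₄
  have hdz₄ : ContDiff ℝ 2 (deriv z₄) := (contDiff_succ_iff_deriv.mp hz₄').2.2
  have hdz₄' : ContDiff ℝ (1+1:ℕ) (deriv z₄) := by exact_mod_cast hdz₄
  have hddz₄ : ContDiff ℝ 1 (deriv (deriv z₄)) := (contDiff_succ_iff_deriv.mp hdz₄').2.2
  -- deriv (deriv z₄) = z₃ on Icc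
  have hdd : Set.EqOn (deriv (deriv z₄)) z₃ (Icc 0 1) := fun x hx => by
    have := heq2 x hx; linarith
  -- third derivative matches deriv z₃ on Icc
  have hddd : Set.EqOn (deriv (deriv (deriv z₄))) (deriv z₃) (Icc 0 1) :=
    derivEqOn hddz₄ (hz₃.of_le (by norm_num)) hdd
  -- y = deriv z₄ satisfies the ODE
  have hyode : ∀ x ∈ Icc (0:ℝ) 1,
      -deriv (deriv (deriv z₄)) x + deriv u₄ x * deriv (deriv z₄) x
        + u₃ x * deriv z₄ x = 0 := by
    intro x hx
    rw [hddd hx, hdd hx]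
    exact heq1 x hx
  obtain ⟨K₁, K₂, hK⟩ := hfund (deriv z₄) hdz₄ hyode
  -- differentiability facts
  have hφ₁d : Differentiable ℝ φ₁ := hφ₁.differentiable (by norm_num)
  have hφ₂d : Differentiable ℝ φ₂ := hφ₂.differentiable (by norm_num)
  have hg : ContDiff ℝ 1 (fun x => K₁ * φ₁ x + K₂ * φ₂ x) :=
    ((hφ₁.of_le (by norm_num)).const_smul K₁).add ((hφ₂.of_le (by norm_num)).const_smul K₂)
  have h6 := derivEqOn (hdz₄.of_le (by norm_num)) hg (fun x hx => hK x hx)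
  have hgd : ∀ x, deriv (fun x => K₁ * φ₁ x + K₂ * φ₂ x) x
      = K₁ * deriv φ₁ x + K₂ * deriv φ₂ x := by
    intro x
    rw [deriv_fun_add ((hφ₁d x).const_mul K₁) ((hφ₂d x).const_mul K₂),
      deriv_const_mul K₁ (hφ₁d x), deriv_const_mul K₂ (hφ₂d x)]
  -- z₃ = K₁ φ₁' + K₂ φ₂' on Icc
  have hz₃eq : ∀ x ∈ Icc (0:ℝ) 1, z₃ x = K₁ * deriv φ₁ x + K₂ * deriv φ₂ x := by
    intro x hx
    rw [← hdd hx, h6 hx, hgd]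
  -- first linear equation, from z₃ 0 = 0
  have heqA : K₁ * deriv φ₁ 0 + K₂ * deriv φ₂ 0 = 0 := by
    have := hz₃eq 0 (by norm_num)
    rw [hbc₃] at this; linarith
  -- second linear equation, from integration
  have hint : (∫ x in (0:ℝ)..1, deriv z₄ x) = z₄ 1 - z₄ 0 :=
    intervalIntegral.integral_deriv_eq_sub
      (fun x _ => hz₄.differentiable (by norm_num) x)
      ((hdz₄.continuous).intervalIntegrable 0 1)
  have hint2 : (∫ x in (0:ℝ)..1, deriv z₄ x)
      = K₁ * (∫ ξ in (0:ℝ)..1, φ₁ ξ) + K₂ * (∫ ξ in (0:ℝ)..1, φ₂ ξ) := by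
    rw [intervalIntegral.integral_congr (g := fun x => K₁ * φ₁ x + K₂ * φ₂ x)
      (by rw [uIcc_of_le (by norm_num : (0:ℝ) ≤ 1)]; exact fun x hx => hK x hx)]
    rw [intervalIntegral.integral_add
      ((show Continuous fun x => K₁ * φ₁ x from continuous_const.mul hφ₁.continuous).intervalIntegrable 0 1)
      ((show Continuous fun x => K₂ * φ₂ x from continuous_const.mul hφ₂.continuous).intervalIntegrable 0 1),
      intervalIntegral.integral_const_mul, intervalIntegral.integral_const_mul]
  have heqB : K₁ * (∫ ξ in (0:ℝ)..1, φ₁ ξ) + K₂ * (∫ ξ in (0:ℝ)..1, φ₂ ξ) = 0 := by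
    rw [← hint2, hint, hbc₄0, hbc₄1]; ring
  -- solve the linear system
  set a := deriv φ₁ 0
  set b := deriv φ₂ 0
  set c := (∫ ξ in (0:ℝ)..1, φ₁ ξ)
  set d := (∫ ξ in (0:ℝ)..1, φ₂ ξ)
  have hK₁ : K₁ = 0 := by
    have h1 : K₁ * (a * d - b * c) = d * (K₁ * a + K₂ * b) - b * (K₁ * c + K₂ * d) := by
      ring
    rw [heqA, heqB] at h1
    have := mul_eq_zero.mp (by linarith : K₁ * (a * d - b * c) = 0)
    tauto
  have hK₂ : K₂ = 0 := by
    have h1 : K₂ * (a * d - b * c) = -(c * (K₁ * a + K₂ * b)) + a * (K₁ * c + K₂ * d) := by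
      ring
    rw [heqA, heqB] at h1
    have := mul_eq_zero.mp (by linarith : K₂ * (a * d - b * c) = 0)
    tauto
  -- conclude
  intro x hx
  constructor
  · have := hz₃eq x hx
    rw [hK₁, hK₂] at this; simpa using this
  · -- z₄ x = z₄ 0 since deriv z₄ = 0 on [0,1]
    have hsub : Icc (0:ℝ) x ⊆ Icc 0 1 := Icc_subset_Icc le_rfl hx.2
    have hintx : (∫ t in (0:ℝ)..x, deriv z₄ t) = z₄ x - z₄ 0 :=
      intervalIntegral.integral_deriv_eq_sub
        (fun t _ => hz₄.differentiable (by norm_num) t)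
        ((hdz₄.continuous).intervalIntegrable 0 x)
    have hzero : (∫ t in (0:ℝ)..x, deriv z₄ t) = 0 := by
      rw [intervalIntegral.integral_congr (g := fun _ => (0:ℝ))
        (by
          rw [uIcc_of_le hx.1]
          intro t ht
          have := hK t (hsub ht)
          rw [hK₁, hK₂] at this; simpa using this)]
      simp
    rw [hintx, hbc₄0] at hzero
    linarith
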